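/- Assume hypotheses (H1) and (H2) and the family setup below, and for each ε ∈ (0,1/2) let ν_ε be the probability measure on (0,∞) with density η_ε(x)·e^{−2Q(x)}·1_{(ε,1/ε)}(x) / ∫_ε^{1/ε} η_ε(y)·e^{−2Q(y)} dy with respect to Lebesgue measure. Then: (i) the family (ν_ε)_{ε ∈ (0,1/2)} is tight, i.e., for every δ > 0 there exists a compact set K ⊂ (0,∞) with ν_ε((0,∞) ∖ K) ≤ δ for all ε ∈ (0,1/2); (ii) for every sequence ε_k → 0 such that ν_{ε_k} converges weakly to a probability measure ν on (0,∞), the limit ν is absolutely continuous with respect to Lebesgue measure. -/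

import Mathlib

open MeasureTheory intervalIntegral Filter BoundedContinuousFunction

open Topology

lemma amgm_div (t w v e : ℝ) (ht : 0 < t) (hw : 0 < w) :
    v * e ≤ t/2 * (w * v^2) + 1/(2*t) * (e^2 / w) := by
  rw [← sub_nonneg]
  have h : t/2 * (w * v^2) + 1/(2*t) * (e^2 / w) - v * e = (t*w*v - e)^2/(2*t*w) := by
    field_simp; ring
  rw [h]; positivity

lemma amgm_lin (t z : ℝ) (ht : 0 < t) : z ≤ (t*z^2 + 1/t)/2 := by
  rw [← sub_nonneg]
  have h : (t*z^2 + 1/t)/2 - z = (t*z - 1)^2/(2*t) := by field_simp; ring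
  rw [h]; positivity

lemma key_energy (q q' Q W : ℝ → ℝ)
    (hq : ∀ x ∈ Set.Ioi (0:ℝ), HasDerivAt q (q' x) x)
    (hq'cont : ContinuousOn q' (Set.Ioi 0))
    (hQder : ∀ x ∈ Set.Ioi (0:ℝ), HasDerivAt Q (q x) x)
    (hWdef : ∀ x ∈ Set.Ioi (0:ℝ), W x = q x ^ 2 - q' x)
    (C : ℝ) (hWlb : ∀ x ∈ Set.Ioi (0:ℝ), -C ≤ W x)
    (Λ : ℝ) (lam : ℝ → ℝ) (η η' η'' : ℝ → ℝ → ℝ)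
    (E₀ B : ℝ) (hE₀ : E₀ = max (2*Λ + C) 0) (hB : B = E₀ + 1)
    (ε : ℝ) (hε : ε ∈ Set.Ioo (0:ℝ) (1/2))
    (hlam : lam ε ≤ Λ)
    (hη' : ∀ x ∈ Set.Icc ε (1/ε), HasDerivAt (η ε) (η' ε x) x)
    (hη'' : ∀ x ∈ Set.Icc ε (1/ε), HasDerivAt (η' ε) (η'' ε x) x)
    (hpos : ∀ x ∈ Set.Ioo ε (1/ε), 0 < η ε x)
    (hbd : η ε ε = 0 ∧ η ε (1/ε) = 0)
    (hode : ∀ x ∈ Set.Icc ε (1/ε),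
      (1/2) * η'' ε x - q x * η' ε x = -(lam ε) * η ε x)
    (hnorm : (∫ x in ε..(1/ε), (η ε x) ^ 2 * Real.exp (-2 * Q x)) = 1) :
    (∀ x ∈ Set.Icc ε (1/ε), 0 ≤ η ε x * Real.exp (-Q x)) ∧
    ContinuousOn (fun x => η ε x * Real.exp (-Q x)) (Set.Icc ε (1/ε)) ∧
    (∫ x in Set.Ioo ε (1/ε), (η ε x * Real.exp (-Q x))^2) = 1 ∧
    IntegrableOn (fun x => (W x + C + 1) * (η ε x * Real.exp (-Q x))^2)
      (Set.Ioo ε (1/ε)) ∧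
    (∫ x in Set.Ioo ε (1/ε), (W x + C + 1) * (η ε x * Real.exp (-Q x))^2) ≤ B ∧
    (∀ x ∈ Set.Icc ε (1/ε), (η ε x * Real.exp (-Q x))^2 ≤ 1 + E₀) ∧
    (∀ x ∈ Set.Icc ε (1/ε), (η ε x * Real.exp (-Q x))^2 ≤ x * ((E₀+1)^2/4)) := by
  obtain ⟨hε0, hε2⟩ := hε
  have hbpos : 0 < 1/ε := by positivity
  have hab : ε < 1/ε := by
    rw [lt_div_iff₀ hε0]; nlinarith
  have hIccsub : Set.Icc ε (1/ε) ⊆ Set.Ioi (0:ℝ) := fun x hx => lt_of_lt_of_le hε0 hx.1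
  have hqc : ContinuousOn q (Set.Ioi 0) := fun x hx => (hq x hx).continuousAt.continuousWithinAt
  have hQc : ContinuousOn Q (Set.Ioi 0) :=
    fun x hx => (hQder x hx).continuousAt.continuousWithinAt
  set u : ℝ → ℝ := fun x => η ε x * Real.exp (-Q x) with hudef
  set v : ℝ → ℝ := fun x => (η' ε x - q x * η ε x) * Real.exp (-Q x) with hvdef
  -- continuity facts on Icc
  have hcη : ContinuousOn (η ε) (Set.Icc ε (1/ε)) :=
    fun x hx => (hη' x hx).continuousAt.continuousWithinAt
  have hcη' : ContinuousOn (η' ε) (Set.Icc ε (1/ε)) :=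
    fun x hx => (hη'' x hx).continuousAt.continuousWithinAt
  have hcq : ContinuousOn q (Set.Icc ε (1/ε)) := hqc.mono hIccsub
  have hcq' : ContinuousOn q' (Set.Icc ε (1/ε)) := hq'cont.mono hIccsub
  have hcQ : ContinuousOn Q (Set.Icc ε (1/ε)) := hQc.mono hIccsub
  have hcE : ContinuousOn (fun x => Real.exp (-Q x)) (Set.Icc ε (1/ε)) :=
    Real.continuous_exp.comp_continuousOn hcQ.neg
  have hcW : ContinuousOn W (Set.Icc ε (1/ε)) :=
    ContinuousOn.congr ((hcq.pow 2).sub hcq') (fun x hx => hWdef x (hIccsub hx))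
  have hcu : ContinuousOn u (Set.Icc ε (1/ε)) := hcη.mul hcE
  have hcv : ContinuousOn v (Set.Icc ε (1/ε)) := (hcη'.sub (hcq.mul hcη)).mul hcE
  -- nonnegativity of η on Icc
  have hηnn : ∀ x ∈ Set.Icc ε (1/ε), 0 ≤ η ε x := by
    intro x hx
    rcases eq_or_lt_of_le hx.1 with h1 | h1
    · rw [← h1, hbd.1]
    rcases eq_or_lt_of_le hx.2 with h2 | h2
    · rw [h2, hbd.2]
    · exact (hpos x ⟨h1, h2⟩).le
  have hunn : ∀ x ∈ Set.Icc ε (1/ε), 0 ≤ u x := by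
    intro x hx; exact mul_nonneg (hηnn x hx) (Real.exp_pos _).le
  have hu0a : u ε = 0 := by simp only [hudef]; rw [hbd.1, zero_mul]
  have hu0b : u (1/ε) = 0 := by simp only [hudef]; rw [hbd.2, zero_mul]
  -- derivative of u
  have hud : ∀ x ∈ Set.Icc ε (1/ε), HasDerivAt u (v x) x := by
    intro x hx
    have h2 : HasDerivAt (fun y => Real.exp (-Q y)) (Real.exp (-Q x) * (-(q x))) x :=
      ((hQder x (hIccsub hx)).neg).exp
    have := (hη' x hx).mul h2
    convert this using 1 <;> try rfl
    simp only [hvdef]; ring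
  -- the integration-by-parts identity
  set gg : ℝ → ℝ := fun x => v x ^ 2 + W x * u x ^ 2 - (2 * lam ε) * u x ^ 2 with hggdef
  have hcgg : ContinuousOn gg (Set.Icc ε (1/ε)) :=
    ((hcv.pow 2).add (hcW.mul (hcu.pow 2))).sub (continuousOn_const.mul (hcu.pow 2))
  have hGd : ∀ x ∈ Set.Icc ε (1/ε),
      HasDerivAt (fun y => η ε y * (η' ε y - q y * η ε y) * Real.exp (-2 * Q y)) (gg x) x := by
    intro x hx
    have hQd := hQder x (hIccsub hx)
    have hexp2 : HasDerivAt (fun y => Real.exp (-2 * Q y)) (Real.exp (-2 * Q x) * (-2 * q x)) x := by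
      have : HasDerivAt (fun y => -2 * Q y) (-2 * q x) x := hQd.const_mul (-2)
      exact this.exp
    have hinner : HasDerivAt (fun y => η ε y * (η' ε y - q y * η ε y))
        (η' ε x * (η' ε x - q x * η ε x) +
          η ε x * (η'' ε x - (q' x * η ε x + q x * η' ε x))) x :=
      (hη' x hx).mul ((hη'' x hx).sub ((hq x (hIccsub hx)).mul (hη' x hx)))
    have := hinner.mul hexp2
    convert this using 1 <;> try rfl
    have h3 : η'' ε x = 2*(q x * η' ε x) - 2*(lam ε * η ε x) := by
      have := hode x hx; linarith
    have hee : Real.exp (-2 * Q x) = Real.exp (-Q x) * Real.exp (-Q x) := by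
      rw [← Real.exp_add]; congr 1; ring
    have hW : W x = q x ^ 2 - q' x := hWdef x (hIccsub hx)
    simp only [hggdef, hudef, hvdef]
    rw [h3, hee, hW]; ring
  have hggint : IntervalIntegrable gg volume ε (1/ε) :=
    hcgg.intervalIntegrable_of_Icc hab.le
  have hinteq : (∫ x in ε..(1/ε), gg x) = 0 := by
    rw [intervalIntegral.integral_eq_sub_of_hasDerivAt
      (fun x hx => hGd x (by rwa [Set.uIcc_of_le hab.le] at hx)) hggint]
    simp only [hbd.1, hbd.2, zero_mul, mul_zero, sub_zero]
  -- individual integrability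
  have hIv2 : IntervalIntegrable (fun x => v x ^ 2) volume ε (1/ε) :=
    (hcv.pow 2).intervalIntegrable_of_Icc hab.le
  have hIWu2 : IntervalIntegrable (fun x => W x * u x ^ 2) volume ε (1/ε) :=
    (hcW.mul (hcu.pow 2)).intervalIntegrable_of_Icc hab.le
  have hIu2' : IntervalIntegrable (fun x => u x ^ 2) volume ε (1/ε) :=
    (hcu.pow 2).intervalIntegrable_of_Icc hab.le
  -- normalization in u-form
  have hsqu : ∀ x, u x ^ 2 = (η ε x) ^ 2 * Real.exp (-2 * Q x) := by
    intro x
    have hee : Real.exp (-2 * Q x) = Real.exp (-Q x) * Real.exp (-Q x) := by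
      rw [← Real.exp_add]; congr 1; ring
    simp only [hudef]; rw [hee]; ring
  have hIu2 : (∫ x in ε..(1/ε), u x ^ 2) = 1 := by
    rw [intervalIntegral.integral_congr (g := fun x => (η ε x)^2 * Real.exp (-2*Q x))
      (fun x _ => hsqu x)]
    exact hnorm
  -- split the identity
  have hsplit : (∫ x in ε..(1/ε), v x ^ 2) + (∫ x in ε..(1/ε), W x * u x ^ 2)
      - 2 * lam ε = 0 := by
    have h1 : (∫ x in ε..(1/ε), gg x) =
        (∫ x in ε..(1/ε), v x ^ 2) + (∫ x in ε..(1/ε), W x * u x ^ 2)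
          - (∫ x in ε..(1/ε), (2 * lam ε) * u x ^ 2) := by
      rw [show gg = fun x => (v x ^ 2 + W x * u x ^ 2) - (2 * lam ε) * u x ^ 2 from rfl]
      rw [intervalIntegral.integral_sub (hIv2.add hIWu2) (hIu2'.const_mul _),
        intervalIntegral.integral_add hIv2 hIWu2]
    rw [h1, intervalIntegral.integral_const_mul, hIu2] at hinteq
    linarith
  set EE := ∫ x in ε..(1/ε), v x ^ 2 with hEEdef
  have hEEnn : 0 ≤ EE :=
    intervalIntegral.integral_nonneg hab.le (fun x _ => sq_nonneg _)
  have hIWlb : -C ≤ ∫ x in ε..(1/ε), W x * u x ^ 2 := by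
    have h1 : (∫ x in ε..(1/ε), (-C) * u x ^ 2) ≤ ∫ x in ε..(1/ε), W x * u x ^ 2 := by
      apply intervalIntegral.integral_mono_on hab.le (hIu2'.const_mul _) hIWu2
      intro x hx
      exact mul_le_mul_of_nonneg_right (hWlb x (hIccsub hx)) (sq_nonneg _)
    rwa [intervalIntegral.integral_const_mul, hIu2, mul_one] at h1
  have hEEub : EE ≤ E₀ := by
    rw [hE₀]
    have : EE ≤ 2*Λ + C := by
      have := hsplit; have := hIWlb; have := hlam
      simp only [← hEEdef] at *
      linarith
    exact le_trans this (le_max_left _ _)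
  have hE₀nn : (0:ℝ) ≤ E₀ := by rw [hE₀]; exact le_max_right _ _
  -- the weighted bound
  have hK5 : (∫ x in ε..(1/ε), (W x + C + 1) * u x ^ 2) ≤ B := by
    have h1 : (∫ x in ε..(1/ε), (W x + C + 1) * u x ^ 2) =
        (∫ x in ε..(1/ε), W x * u x ^ 2) + (∫ x in ε..(1/ε), (C+1) * u x ^ 2) := by
      rw [← intervalIntegral.integral_add hIWu2 (hIu2'.const_mul _)]
      apply intervalIntegral.integral_congr
      intro x _; ring
    rw [h1, intervalIntegral.integral_const_mul, hIu2, mul_one, hB]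
    have h2 : lam ε ≤ Λ := hlam
    have : (∫ x in ε..(1/ε), W x * u x ^ 2) = 2 * lam ε - EE := by
      linarith [hsplit]
    rw [this, hE₀]
    have := le_max_left (2*Λ + C) 0
    linarith
  -- pointwise sup bound
  have hv2ext : ∀ x ∈ Set.Icc ε (1/ε), (∫ y in ε..x, v y ^ 2) ≤ EE := by
    intro x hx
    have hεx : ε ≤ x := hx.1
    have hxb : x ≤ 1/ε := hx.2
    have hIccsub2 : Set.Icc ε x ⊆ Set.Icc ε (1/ε) := Set.Icc_subset_Icc le_rfl hxb
    have hIccsub3 : Set.Icc x (1/ε) ⊆ Set.Icc ε (1/ε) := Set.Icc_subset_Icc hεx le_rfl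
    have hi1 : IntervalIntegrable (fun y => v y ^ 2) volume ε x :=
      ((hcv.mono hIccsub2).pow 2).intervalIntegrable_of_Icc hεx
    have hi2 : IntervalIntegrable (fun y => v y ^ 2) volume x (1/ε) :=
      ((hcv.mono hIccsub3).pow 2).intervalIntegrable_of_Icc hxb
    have hadd := intervalIntegral.integral_add_adjacent_intervals hi1 hi2
    have hnn2 : 0 ≤ ∫ y in x..(1/ε), v y ^ 2 :=
      intervalIntegral.integral_nonneg hxb (fun y _ => sq_nonneg _)
    have : (∫ y in ε..(1/ε), v y ^ 2) = EE := hEEdef.symm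
    linarith
  have hK6 : ∀ x ∈ Set.Icc ε (1/ε), u x ^ 2 ≤ 1 + E₀ := by
    intro x hx
    have hεx : ε ≤ x := hx.1
    have hxb : x ≤ 1/ε := hx.2
    have hIccsub2 : Set.Icc ε x ⊆ Set.Icc ε (1/ε) := Set.Icc_subset_Icc le_rfl hxb
    have hIccsub3 : Set.Icc x (1/ε) ⊆ Set.Icc ε (1/ε) := Set.Icc_subset_Icc hεx le_rfl
    have hd2 : ∀ y ∈ Set.uIcc ε x, HasDerivAt (fun z => u z ^ 2) (2 * u y * v y) y := by
      intro y hy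
      rw [Set.uIcc_of_le hεx] at hy
      have h2 := (hud y (hIccsub2 hy)).pow 2
      convert h2 using 1 <;> try rfl
      norm_num
    have hint2 : IntervalIntegrable (fun y => 2 * u y * v y) volume ε x :=
      ((continuousOn_const.mul (hcu.mono hIccsub2)).mul
        (hcv.mono hIccsub2)).intervalIntegrable_of_Icc hεx
    have heq : (∫ y in ε..x, 2 * u y * v y) = u x ^ 2 := by
      rw [intervalIntegral.integral_eq_sub_of_hasDerivAt hd2 hint2, hu0a]
      ring
    have hintuv : IntervalIntegrable (fun y => u y ^ 2 + v y ^ 2) volume ε x :=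
      (((hcu.mono hIccsub2).pow 2).add
        ((hcv.mono hIccsub2).pow 2)).intervalIntegrable_of_Icc hεx
    have hle : (∫ y in ε..x, 2 * u y * v y) ≤ ∫ y in ε..x, (u y ^ 2 + v y ^ 2) := by
      apply intervalIntegral.integral_mono_on hεx hint2 hintuv
      intro y _
      nlinarith [sq_nonneg (u y - v y)]
    have hintuv1 : IntervalIntegrable (fun y => u y ^ 2) volume ε x :=
      ((hcu.mono hIccsub2).pow 2).intervalIntegrable_of_Icc hεx
    have hintvv1 : IntervalIntegrable (fun y => v y ^ 2) volume ε x :=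
      ((hcv.mono hIccsub2).pow 2).intervalIntegrable_of_Icc hεx
    have hsplit2 : (∫ y in ε..x, (u y ^ 2 + v y ^ 2))
        = (∫ y in ε..x, u y ^ 2) + (∫ y in ε..x, v y ^ 2) :=
      intervalIntegral.integral_add hintuv1 hintvv1
    -- ∫_ε^x u^2 ≤ 1
    have hu2ext : (∫ y in ε..x, u y ^ 2) ≤ 1 := by
      have hi2 : IntervalIntegrable (fun y => u y ^ 2) volume x (1/ε) :=
        ((hcu.mono hIccsub3).pow 2).intervalIntegrable_of_Icc hxb
      have hadd := intervalIntegral.integral_add_adjacent_intervals hintuv1 hi2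
      have hnn2 : 0 ≤ ∫ y in x..(1/ε), u y ^ 2 :=
        intervalIntegral.integral_nonneg hxb (fun y _ => sq_nonneg _)
      rw [hIu2] at hadd
      linarith
    have hv2x := hv2ext x hx
    linarith
  have hK7 : ∀ x ∈ Set.Icc ε (1/ε), u x ^ 2 ≤ x * ((E₀+1)^2/4) := by
    intro x hx
    have hεx : ε ≤ x := hx.1
    have hx0 : 0 < x := lt_of_lt_of_le hε0 hεx
    have ht : 0 < Real.sqrt x := Real.sqrt_pos.mpr hx0
    have hIccsub2 : Set.Icc ε x ⊆ Set.Icc ε (1/ε) := Set.Icc_subset_Icc le_rfl hx.2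
    have hux : u x = ∫ y in ε..x, v y := by
      rw [intervalIntegral.integral_eq_sub_of_hasDerivAt
        (fun y hy => hud y (hIccsub2 (by rwa [Set.uIcc_of_le hεx] at hy)))
        ((hcv.mono hIccsub2).intervalIntegrable_of_Icc hεx), hu0a, sub_zero]
    have hintv : IntervalIntegrable v volume ε x :=
      (hcv.mono hIccsub2).intervalIntegrable_of_Icc hεx
    have hintv2 : IntervalIntegrable (fun y => v y ^ 2) volume ε x :=
      ((hcv.mono hIccsub2).pow 2).intervalIntegrable_of_Icc hεx
    have hintrhs : IntervalIntegrable (fun y => (Real.sqrt x * v y ^ 2 + 1/Real.sqrt x)/2)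
        volume ε x :=
      (((hintv2.const_mul _).add intervalIntegrable_const).div_const _)
    have h1 : u x ≤ ∫ y in ε..x, (Real.sqrt x * v y ^ 2 + 1/Real.sqrt x)/2 := by
      rw [hux]
      apply intervalIntegral.integral_mono_on hεx hintv hintrhs
      intro y _
      exact amgm_lin _ _ ht
    have h2 : (∫ y in ε..x, (Real.sqrt x * v y ^ 2 + 1/Real.sqrt x)/2)
        = (Real.sqrt x * (∫ y in ε..x, v y ^ 2) + (x - ε) * (1/Real.sqrt x))/2 := by
      rw [intervalIntegral.integral_div,
        intervalIntegral.integral_add (hintv2.const_mul _) intervalIntegrable_const,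
        intervalIntegral.integral_const_mul, intervalIntegral.integral_const,
        smul_eq_mul]
    have hv2x : (∫ y in ε..x, v y ^ 2) ≤ E₀ := le_trans (hv2ext x hx) hEEub
    have hxs : x / Real.sqrt x = Real.sqrt x := Real.div_sqrt
    have h3 : u x ≤ Real.sqrt x * (E₀ + 1) / 2 := by
      have hb1 : Real.sqrt x * (∫ y in ε..x, v y ^ 2) ≤ Real.sqrt x * E₀ :=
        mul_le_mul_of_nonneg_left hv2x ht.le
      have hb3 : x * (1/Real.sqrt x) = Real.sqrt x := by
        rw [mul_one_div, hxs]
      have hb2 : (x - ε) * (1/Real.sqrt x) ≤ Real.sqrt x := by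
        calc (x - ε) * (1/Real.sqrt x) ≤ x * (1/Real.sqrt x) :=
              mul_le_mul_of_nonneg_right (show x - ε ≤ x by linarith)
                (show (0:ℝ) ≤ 1/Real.sqrt x by positivity)
          _ = Real.sqrt x := hb3
      rw [h2] at h1
      have hexpand : Real.sqrt x * (E₀ + 1) / 2 = (Real.sqrt x * E₀ + Real.sqrt x)/2 := by
        ring
      rw [hexpand]
      linarith [hb1, hb2]
    have h4 : u x ^ 2 ≤ (Real.sqrt x * (E₀ + 1) / 2) ^ 2 :=
      pow_le_pow_left₀ (hunn x hx) h3 2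
    have h5 : (Real.sqrt x * (E₀ + 1) / 2) ^ 2 = x * ((E₀+1)^2/4) := by
      rw [div_pow, mul_pow, Real.sq_sqrt hx0.le]
      ring
    linarith
  refine ⟨hunn, hcu, ?_, ?_, ?_, hK6, hK7⟩
  · rw [← MeasureTheory.integral_Ioc_eq_integral_Ioo,
      ← intervalIntegral.integral_of_le hab.le]
    exact hIu2
  · exact (((hcW.add continuousOn_const).add continuousOn_const).mul
      (hcu.pow 2)).integrableOn_Icc.mono_set Set.Ioo_subset_Icc_self
  · rw [← MeasureTheory.integral_Ioc_eq_integral_Ioo,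
      ← intervalIntegral.integral_of_le hab.le]
    exact hK5

set_option maxHeartbeats 4000000 in
theorem stmt_8 (q q' Q W : ℝ → ℝ)
    (hq : ∀ x ∈ Set.Ioi (0:ℝ), HasDerivAt q (q' x) x)
    (hq'cont : ContinuousOn q' (Set.Ioi 0))
    (hQ : ∀ x, Q x = ∫ y in (1:ℝ)..x, q y)
    (hWdef : ∀ x ∈ Set.Ioi (0:ℝ), W x = q x ^ 2 - q' x)
    -- Hypothesis (H1)
    (C : ℝ) (hC : 0 < C) (hWlb : ∀ x ∈ Set.Ioi (0:ℝ), -C ≤ W x)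
    (hWtop : Tendsto W atTop atTop)
    -- Hypothesis (H2)
    (hH2a : IntegrableOn (fun x => Real.exp (-2 * Q x)) (Set.Ioi 1))
    (hH2b : IntegrableOn (fun x => Real.exp (-2 * Q x) / (W x + C + 1)) (Set.Ioo 0 1))
    -- Family setup
    (Λ : ℝ) (lam : ℝ → ℝ) (η η' η'' : ℝ → ℝ → ℝ)
    (hlam : ∀ ε ∈ Set.Ioo (0:ℝ) (1/2), lam ε ≤ Λ)
    (hη' : ∀ ε ∈ Set.Ioo (0:ℝ) (1/2), ∀ x ∈ Set.Icc ε (1/ε),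
      HasDerivAt (η ε) (η' ε x) x)
    (hη'' : ∀ ε ∈ Set.Ioo (0:ℝ) (1/2), ∀ x ∈ Set.Icc ε (1/ε),
      HasDerivAt (η' ε) (η'' ε x) x)
    (hη''cont : ∀ ε ∈ Set.Ioo (0:ℝ) (1/2), ContinuousOn (η'' ε) (Set.Icc ε (1/ε)))
    (hpos : ∀ ε ∈ Set.Ioo (0:ℝ) (1/2), ∀ x ∈ Set.Ioo ε (1/ε), 0 < η ε x)
    (hbd : ∀ ε ∈ Set.Ioo (0:ℝ) (1/2), η ε ε = 0 ∧ η ε (1/ε) = 0)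
    (hode : ∀ ε ∈ Set.Ioo (0:ℝ) (1/2), ∀ x ∈ Set.Icc ε (1/ε),
      (1/2) * η'' ε x - q x * η' ε x = -(lam ε) * η ε x)
    (hnorm : ∀ ε ∈ Set.Ioo (0:ℝ) (1/2),
      (∫ x in ε..(1/ε), (η ε x) ^ 2 * Real.exp (-2 * Q x)) = 1)
    -- the measures ν_ε
    (ν : ℝ → Measure ℝ)
    (hν : ∀ ε ∈ Set.Ioo (0:ℝ) (1/2), ν ε = volume.withDensity (fun x =>
      ENNReal.ofReal ((Set.Ioo ε (1/ε)).indicator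
        (fun y => η ε y * Real.exp (-2 * Q y)) x /
        (∫ y in ε..(1/ε), η ε y * Real.exp (-2 * Q y))))) :
    -- (i) tightness of the family (ν_ε)
    (∀ δ > 0, ∃ K : Set ℝ, IsCompact K ∧ K ⊆ Set.Ioi 0 ∧
      ∀ ε ∈ Set.Ioo (0:ℝ) (1/2), ν ε (Set.Ioi 0 \ K) ≤ ENNReal.ofReal δ) ∧
    -- (ii) any weak limit along a sequence ε_k → 0 is absolutely continuous
    (∀ (εs : ℕ → ℝ) (νlim : Measure ℝ),
      (∀ k, εs k ∈ Set.Ioo (0:ℝ) (1/2)) →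
      Tendsto εs atTop (nhds 0) →
      IsProbabilityMeasure νlim →
      (∀ f : ℝ →ᵇ ℝ,
        Tendsto (fun k => ∫ x, f x ∂(ν (εs k))) atTop (nhds (∫ x, f x ∂νlim))) →
      νlim ≪ volume) := by
  -- basic consequences
  have hqc : ContinuousOn q (Set.Ioi 0) := fun x hx => (hq x hx).continuousAt.continuousWithinAt
  have hQder : ∀ x ∈ Set.Ioi (0:ℝ), HasDerivAt Q (q x) x := by
    intro x hx
    have hQfun : Q = fun x => ∫ y in (1:ℝ)..x, q y := funext hQ
    rw [hQfun]
    have hsub : Set.uIcc (1:ℝ) x ⊆ Set.Ioi 0 := by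
      intro y hy
      have h1 : min 1 x ≤ y := hy.1
      have : (0:ℝ) < min 1 x := lt_min one_pos hx
      exact lt_of_lt_of_le this h1
    exact intervalIntegral.integral_hasDerivAt_right
      ((hqc.mono hsub).intervalIntegrable)
      (hqc.stronglyMeasurableAtFilter isOpen_Ioi x hx)
      (hq x hx).continuousAt
  have hQc : ContinuousOn Q (Set.Ioi 0) :=
    fun x hx => (hQder x hx).continuousAt.continuousWithinAt
  have hexpQ : ∀ r : ℝ, Real.exp (-2 * r) = Real.exp (-r) * Real.exp (-r) := by
    intro r; rw [← Real.exp_add]; congr 1; ring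
  have hW1 : ∀ x ∈ Set.Ioi (0:ℝ), (1:ℝ) ≤ W x + C + 1 := by
    intro x hx; have := hWlb x hx; linarith
  set E₀ : ℝ := max (2*Λ + C) 0 with hE₀def
  have hE₀nn : (0:ℝ) ≤ E₀ := le_max_right _ _
  set B : ℝ := E₀ + 1 with hBdef
  have hBpos : (0:ℝ) < B := by rw [hBdef]; linarith
  set S : ℝ := Real.sqrt (1 + E₀) with hSdef
  have hSpos : 0 < S := Real.sqrt_pos.mpr (by linarith)
  have hkey := fun (ε : ℝ) (hε : ε ∈ Set.Ioo (0:ℝ) (1/2)) =>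
    key_energy q q' Q W hq hq'cont hQder hWdef C hWlb Λ lam η η' η'' E₀ B hE₀def hBdef
      ε hε (hlam ε hε) (hη' ε hε) (hη'' ε hε) (hpos ε hε) (hbd ε hε) (hode ε hε) (hnorm ε hε)
  have hab : ∀ ε ∈ Set.Ioo (0:ℝ) (1/2), ε < 1/ε := by
    intro ε hε
    rw [lt_div_iff₀ hε.1]
    nlinarith [hε.1, hε.2]
  have hsub : ∀ ε ∈ Set.Ioo (0:ℝ) (1/2), Set.Icc ε (1/ε) ⊆ Set.Ioi 0 :=
    fun ε hε x hx => lt_of_lt_of_le hε.1 hx.1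
  -- pointwise: u ≤ S on Icc
  have husup : ∀ ε ∈ Set.Ioo (0:ℝ) (1/2), ∀ x ∈ Set.Icc ε (1/ε),
      η ε x * Real.exp (-Q x) ≤ S := by
    intro ε hε x hx
    obtain ⟨K1, _, _, _, _, K6, _⟩ := hkey ε hε
    have h1 : η ε x * Real.exp (-Q x) = Real.sqrt ((η ε x * Real.exp (-Q x))^2) :=
      (Real.sqrt_sq (K1 x hx)).symm
    rw [h1, hSdef]
    exact Real.sqrt_le_sqrt (K6 x hx)
  -- continuity of the density integrand
  have hgcont : ∀ ε ∈ Set.Ioo (0:ℝ) (1/2),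
      ContinuousOn (fun y => η ε y * Real.exp (-2 * Q y)) (Set.Icc ε (1/ε)) := by
    intro ε hε
    have hcη : ContinuousOn (η ε) (Set.Icc ε (1/ε)) :=
      fun x hx => (hη' ε hε x hx).continuousAt.continuousWithinAt
    exact hcη.mul (Real.continuous_exp.comp_continuousOn
      ((continuousOn_const.mul (hQc.mono (hsub ε hε)))))
  have hgint : ∀ ε ∈ Set.Ioo (0:ℝ) (1/2),
      IntegrableOn (fun y => η ε y * Real.exp (-2 * Q y)) (Set.Ioo ε (1/ε)) :=
    fun ε hε => ((hgcont ε hε).integrableOn_Icc).mono_set Set.Ioo_subset_Icc_self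
  have hgnn : ∀ ε ∈ Set.Ioo (0:ℝ) (1/2), ∀ y ∈ Set.Ioo ε (1/ε),
      0 ≤ η ε y * Real.exp (-2 * Q y) :=
    fun ε hε y hy => mul_nonneg (hpos ε hε y hy).le (Real.exp_pos _).le
  -- interval integral equals the set integral over Ioo
  have hZIoo : ∀ ε ∈ Set.Ioo (0:ℝ) (1/2),
      (∫ y in ε..(1/ε), η ε y * Real.exp (-2 * Q y))
        = ∫ y in Set.Ioo ε (1/ε), η ε y * Real.exp (-2 * Q y) := by
    intro ε hε
    rw [intervalIntegral.integral_of_le (hab ε hε).le,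
      MeasureTheory.integral_Ioc_eq_integral_Ioo]
  -- choice of M₀ from (H1)
  obtain ⟨M₁, hM₁⟩ := eventually_atTop.mp (hWtop.eventually_ge_atTop (4*B - C - 1))
  set M₀ : ℝ := max M₁ 1 with hM₀def
  have hM₀1 : (1:ℝ) ≤ M₀ := le_max_right _ _
  have hM₀W : ∀ x : ℝ, M₀ ≤ x → 4*B ≤ W x + C + 1 := by
    intro x hx
    have := hM₁ x (le_trans (le_max_left _ _) hx)
    linarith
  -- choice of a₀
  set a₀ : ℝ := min (1/2) (1/(E₀+1)) with ha₀def
  have ha₀pos : 0 < a₀ := lt_min (by norm_num) (by positivity)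
  have ha₀half : a₀ ≤ 1/2 := min_le_left _ _
  have ha₀E : a₀ * (E₀ + 1) ≤ 1 := by
    have h1 : a₀ ≤ 1/(E₀+1) := min_le_right _ _
    rw [← le_div_iff₀ (by positivity : (0:ℝ) < E₀ + 1)]
    exact h1
  have ha₀M₀ : a₀ < M₀ := lt_of_le_of_lt ha₀half (by linarith)
  -- minimum of exp(-Q) on [a₀, M₀]
  have hIccsub0 : Set.Icc a₀ M₀ ⊆ Set.Ioi (0:ℝ) := fun x hx => lt_of_lt_of_le ha₀pos hx.1
  have hcE0 : ContinuousOn (fun x => Real.exp (-Q x)) (Set.Icc a₀ M₀) :=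
    Real.continuous_exp.comp_continuousOn (hQc.mono hIccsub0).neg
  obtain ⟨x₀, hx₀mem, hx₀min'⟩ := (isCompact_Icc (a := a₀) (b := M₀)).exists_isMinOn
    ⟨a₀, le_rfl, ha₀M₀.le⟩ hcE0
  have hx₀min : ∀ y ∈ Set.Icc a₀ M₀, Real.exp (-Q x₀) ≤ Real.exp (-Q y) :=
    fun y hy => hx₀min' hy
  set c₀ : ℝ := Real.exp (-Q x₀) with hc₀def
  have hc₀pos : 0 < c₀ := Real.exp_pos _
  set Z₀ : ℝ := c₀ / (2*S) with hZ₀def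
  have hZ₀pos : 0 < Z₀ := by rw [hZ₀def]; positivity
  -- lower bound on the normalizing constant
  have hZlb : ∀ ε ∈ Set.Ioo (0:ℝ) (1/2),
      Z₀ ≤ ∫ y in ε..(1/ε), η ε y * Real.exp (-2 * Q y) := by
    intro ε hε
    obtain ⟨K1, K2, K3, K4, K5, K6, K7⟩ := hkey ε hε
    have habε := hab ε hε
    have hIccsubε := hsub ε hε
    have hIoosub : Set.Ioo ε (1/ε) ⊆ Set.Icc ε (1/ε) := Set.Ioo_subset_Icc_self
    have hIu2 : IntegrableOn (fun x => (η ε x * Real.exp (-Q x))^2) (Set.Ioo ε (1/ε)) :=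
      ((K2.pow 2).integrableOn_Icc).mono_set Set.Ioo_subset_Icc_self
    -- partition
    set S1 : Set ℝ := Set.Ioo ε (1/ε) ∩ Set.Iic a₀ with hS1def
    set S3 : Set ℝ := Set.Ioo ε (1/ε) ∩ Set.Ioo a₀ M₀ with hS3def
    set S2 : Set ℝ := Set.Ioo ε (1/ε) ∩ Set.Ici M₀ with hS2def
    have hmS1 : MeasurableSet S1 := measurableSet_Ioo.inter measurableSet_Iic
    have hmS3 : MeasurableSet S3 := measurableSet_Ioo.inter measurableSet_Ioo
    have hmS2 : MeasurableSet S2 := measurableSet_Ioo.inter measurableSet_Ici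
    have hcover : Set.Ioo ε (1/ε) = (S1 ∪ S3) ∪ S2 := by
      ext y
      simp only [hS1def, hS2def, hS3def, Set.mem_union, Set.mem_inter_iff, Set.mem_Iic,
        Set.mem_Ioo, Set.mem_Ici]
      constructor
      · intro hy
        rcases le_or_gt y a₀ with h | h
        · exact Or.inl (Or.inl ⟨hy, h⟩)
        rcases lt_or_ge y M₀ with h2 | h2
        · exact Or.inl (Or.inr ⟨hy, h, h2⟩)
        · exact Or.inr ⟨hy, h2⟩
      · rintro ((⟨hy, _⟩ | ⟨hy, _⟩) | ⟨hy, _⟩) <;> exact hy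
    have hdisj13 : Disjoint S1 S3 := by
      rw [Set.disjoint_left]
      rintro y ⟨_, h1⟩ ⟨_, h2, _⟩
      exact absurd h1 (not_le.mpr h2)
    have hdisj2 : Disjoint (S1 ∪ S3) S2 := by
      rw [Set.disjoint_left]
      rintro y (⟨_, h1⟩ | ⟨_, _, h1⟩) ⟨_, h2⟩
      · exact absurd (le_trans h2 h1) (not_le.mpr (lt_of_le_of_lt ha₀half (by linarith)))
      · exact absurd h2 (not_le.mpr h1)
    have hIS1 : IntegrableOn (fun x => (η ε x * Real.exp (-Q x))^2) S1 :=
      hIu2.mono_set Set.inter_subset_left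
    have hIS3 : IntegrableOn (fun x => (η ε x * Real.exp (-Q x))^2) S3 :=
      hIu2.mono_set Set.inter_subset_left
    have hIS2 : IntegrableOn (fun x => (η ε x * Real.exp (-Q x))^2) S2 :=
      hIu2.mono_set Set.inter_subset_left
    have hadd : (∫ x in Set.Ioo ε (1/ε), (η ε x * Real.exp (-Q x))^2)
        = (∫ x in S1, (η ε x * Real.exp (-Q x))^2)
          + (∫ x in S3, (η ε x * Real.exp (-Q x))^2)
          + (∫ x in S2, (η ε x * Real.exp (-Q x))^2) := by
      rw [hcover, MeasureTheory.setIntegral_union hdisj2 hmS2 (hIS1.union hIS3) hIS2,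
        MeasureTheory.setIntegral_union hdisj13 hmS3 hIS1 hIS3]
    -- the S1 integral is at most 1/4
    have hS1le : (∫ x in S1, (η ε x * Real.exp (-Q x))^2) ≤ 1/4 := by
      have hptw : ∀ x ∈ S1, (η ε x * Real.exp (-Q x))^2 ≤ a₀ * ((E₀+1)^2/4) := by
        rintro x ⟨hx1, hx2⟩
        refine le_trans (K7 x (hIoosub hx1)) ?_
        exact mul_le_mul_of_nonneg_right hx2 (by positivity)
      have hvol : volume S1 ≤ ENNReal.ofReal a₀ := by
        have : S1 ⊆ Set.Ioc 0 a₀ := by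
          rintro x ⟨hx1, hx2⟩
          exact ⟨lt_trans hε.1 hx1.1, hx2⟩
        refine le_trans (measure_mono this) ?_
        rw [Real.volume_Ioc]
        simp
      have hvolR : (volume S1).toReal ≤ a₀ := ENNReal.toReal_le_of_le_ofReal ha₀pos.le hvol
      have h1 : (∫ x in S1, (η ε x * Real.exp (-Q x))^2)
          ≤ ∫ _x in S1, a₀ * ((E₀+1)^2/4) := by
        apply MeasureTheory.setIntegral_mono_on hIS1 _ hmS1 hptw
        exact (MeasureTheory.integrableOn_const_iff).mpr (Or.inr
          (lt_of_le_of_lt (measure_mono (fun x hx => hx.1))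
            (measure_Ioo_lt_top)))
      rw [MeasureTheory.setIntegral_const, smul_eq_mul, measureReal_def] at h1
      have h2 : (volume S1).toReal * (a₀ * ((E₀+1)^2/4)) ≤ a₀ * (a₀ * ((E₀+1)^2/4)) :=
        mul_le_mul_of_nonneg_right hvolR (by positivity)
      have h3 : a₀ * (a₀ * ((E₀+1)^2/4)) ≤ 1/4 := by
        have h0 : 0 ≤ a₀*(E₀+1) := by positivity
        nlinarith [ha₀E, h0]
      linarith
    -- the S2 integral is at most 1/4
    have hS2le : (∫ x in S2, (η ε x * Real.exp (-Q x))^2) ≤ 1/4 := by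
      have hptw : ∀ x ∈ S2, (η ε x * Real.exp (-Q x))^2
          ≤ (1/(4*B)) * ((W x + C + 1) * (η ε x * Real.exp (-Q x))^2) := by
        rintro x ⟨hx1, hx2⟩
        have h4B := hM₀W x hx2
        have hsq : 4*B * (η ε x * Real.exp (-Q x))^2
            ≤ (W x + C + 1) * (η ε x * Real.exp (-Q x))^2 :=
          mul_le_mul_of_nonneg_right h4B (sq_nonneg _)
        have h4Bpos : (0:ℝ) < 4*B := by linarith
        calc (η ε x * Real.exp (-Q x))^2
            = (1/(4*B)) * (4*B * (η ε x * Real.exp (-Q x))^2) := by field_simp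
          _ ≤ (1/(4*B)) * ((W x + C + 1) * (η ε x * Real.exp (-Q x))^2) :=
              mul_le_mul_of_nonneg_left hsq (by positivity)
      have h1 : (∫ x in S2, (η ε x * Real.exp (-Q x))^2)
          ≤ ∫ x in S2, (1/(4*B)) * ((W x + C + 1) * (η ε x * Real.exp (-Q x))^2) := by
        apply MeasureTheory.setIntegral_mono_on hIS2 _ hmS2 hptw
        exact (K4.mono_set Set.inter_subset_left).const_mul _
      rw [MeasureTheory.integral_const_mul] at h1
      have h2 : (∫ x in S2, (W x + C + 1) * (η ε x * Real.exp (-Q x))^2)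
          ≤ ∫ x in Set.Ioo ε (1/ε), (W x + C + 1) * (η ε x * Real.exp (-Q x))^2 := by
        apply MeasureTheory.setIntegral_mono_set K4
        · refine (ae_restrict_iff' measurableSet_Ioo).mpr (ae_of_all _ ?_)
          intro y hy
          exact mul_nonneg (by linarith [hW1 y (hIccsubε (hIoosub hy))]) (sq_nonneg _)
        · exact (Set.inter_subset_left).eventuallyLE
      have h3 : (1/(4*B)) * (∫ x in S2, (W x + C + 1) * (η ε x * Real.exp (-Q x))^2)
          ≤ (1/(4*B)) * B := by
        apply mul_le_mul_of_nonneg_left (le_trans h2 K5) (by positivity)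
      have h4 : (1/(4*B)) * B = 1/4 := by field_simp
      linarith
    -- hence the middle integral is at least 1/2
    have hS3ge : (1:ℝ)/2 ≤ ∫ x in S3, (η ε x * Real.exp (-Q x))^2 := by
      rw [K3] at hadd
      linarith
    -- compare with the density integrand on S3
    have hptw3 : ∀ x ∈ S3, (c₀/S) * (η ε x * Real.exp (-Q x))^2
        ≤ η ε x * Real.exp (-2 * Q x) := by
      rintro x ⟨hx1, hx2⟩
      have hxIcc : x ∈ Set.Icc ε (1/ε) := hIoosub hx1
      have hu := K1 x hxIcc
      have huS := husup ε hε x hxIcc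
      have hcmin : c₀ ≤ Real.exp (-Q x) := hx₀min x ⟨hx2.1.le, hx2.2.le⟩
      have h1 : (η ε x * Real.exp (-Q x))^2 ≤ S * (η ε x * Real.exp (-Q x)) := by
        rw [sq]
        exact mul_le_mul_of_nonneg_right huS hu
      have h2 : (c₀/S) * (η ε x * Real.exp (-Q x))^2
          ≤ (c₀/S) * (S * (η ε x * Real.exp (-Q x))) :=
        mul_le_mul_of_nonneg_left h1 (by positivity)
      have h3 : (c₀/S) * (S * (η ε x * Real.exp (-Q x))) = c₀ * (η ε x * Real.exp (-Q x)) := by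
        field_simp
      have h4 : c₀ * (η ε x * Real.exp (-Q x)) ≤ Real.exp (-Q x) * (η ε x * Real.exp (-Q x)) :=
        mul_le_mul_of_nonneg_right hcmin hu
      have h5 : Real.exp (-Q x) * (η ε x * Real.exp (-Q x)) = η ε x * Real.exp (-2 * Q x) := by
        rw [hexpQ (Q x)]; ring
      linarith
    have hI3g : IntegrableOn (fun y => η ε y * Real.exp (-2 * Q y)) S3 :=
      (hgint ε hε).mono_set Set.inter_subset_left
    have h6 : (∫ x in S3, (c₀/S) * (η ε x * Real.exp (-Q x))^2)
        ≤ ∫ x in S3, η ε x * Real.exp (-2 * Q x) := by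
      apply MeasureTheory.setIntegral_mono_on (hIS3.const_mul _) hI3g hmS3 hptw3
    rw [MeasureTheory.integral_const_mul] at h6
    have h7 : (∫ x in S3, η ε x * Real.exp (-2 * Q x))
        ≤ ∫ x in Set.Ioo ε (1/ε), η ε x * Real.exp (-2 * Q x) := by
      apply MeasureTheory.setIntegral_mono_set (hgint ε hε)
      · exact (ae_restrict_iff' measurableSet_Ioo).mpr (ae_of_all _ (hgnn ε hε))
      · exact (Set.inter_subset_left).eventuallyLE
    have h8 : (c₀/S) * (1/2) ≤ (c₀/S) * ∫ x in S3, (η ε x * Real.exp (-Q x))^2 :=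
      mul_le_mul_of_nonneg_left hS3ge (by positivity)
    have h9 : Z₀ = (c₀/S) * (1/2) := by rw [hZ₀def]; ring
    rw [hZIoo ε hε]
    linarith
  have hZpos : ∀ ε ∈ Set.Ioo (0:ℝ) (1/2),
      0 < ∫ y in ε..(1/ε), η ε y * Real.exp (-2 * Q y) :=
    fun ε hε => lt_of_lt_of_le hZ₀pos (hZlb ε hε)
  -- the value of ν ε on measurable sets
  have hνap : ∀ ε ∈ Set.Ioo (0:ℝ) (1/2), ∀ s : Set ℝ, MeasurableSet s →
      ν ε s = ENNReal.ofReal ((∫ y in s ∩ Set.Ioo ε (1/ε), η ε y * Real.exp (-2 * Q y))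
        / (∫ y in ε..(1/ε), η ε y * Real.exp (-2 * Q y))) := by
    intro ε hε s hs
    rw [hν ε hε, withDensity_apply _ hs]
    have hfint : Integrable (fun x => (Set.Ioo ε (1/ε)).indicator
        (fun y => η ε y * Real.exp (-2 * Q y)) x
        / (∫ y in ε..(1/ε), η ε y * Real.exp (-2 * Q y))) volume :=
      ((hgint ε hε).integrable_indicator measurableSet_Ioo).div_const _
    have hnn : ∀ x, 0 ≤ (Set.Ioo ε (1/ε)).indicator
        (fun y => η ε y * Real.exp (-2 * Q y)) x
        / (∫ y in ε..(1/ε), η ε y * Real.exp (-2 * Q y)) := by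
      intro x
      apply div_nonneg _ (hZpos ε hε).le
      exact Set.indicator_nonneg (hgnn ε hε) x
    rw [← MeasureTheory.ofReal_integral_eq_lintegral_ofReal hfint.restrict
      (ae_of_all _ hnn)]
    congr 1
    rw [MeasureTheory.integral_div, MeasureTheory.setIntegral_indicator measurableSet_Ioo]
  -- each ν ε is a probability measure
  have hprob : ∀ ε ∈ Set.Ioo (0:ℝ) (1/2), IsProbabilityMeasure (ν ε) := by
    intro ε hε
    constructor
    rw [hνap ε hε Set.univ MeasurableSet.univ, Set.univ_inter, ← hZIoo ε hε,
      div_self (hZpos ε hε).ne', ENNReal.ofReal_one]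
  -- main tightness estimate
  have main : ∀ δ : ℝ, 0 < δ → ∃ aK MK : ℝ, 0 < aK ∧ aK ≤ 1 ∧ 1 ≤ MK ∧
      ∀ ε ∈ Set.Ioo (0:ℝ) (1/2), ν ε (Set.Icc aK MK)ᶜ ≤ ENNReal.ofReal δ := by
    intro δ hδ
    obtain ⟨δ', hδ'def, hδ'pos⟩ : ∃ d : ℝ, d = δ * Z₀ / 2 ∧ 0 < d :=
      ⟨_, rfl, by positivity⟩
    obtain ⟨t, htdef, ht⟩ : ∃ d : ℝ, d = δ' / B ∧ 0 < d := ⟨_, rfl, by positivity⟩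
    obtain ⟨τ, hτdef, hτ⟩ : ∃ d : ℝ, d = t * δ' ∧ 0 < d := ⟨_, rfl, by positivity⟩
    -- choose aK using (H2b)
    have tendA : Tendsto (fun n : ℕ => ∫ x in Set.Ioo (0:ℝ) (1/(n+1:ℝ)),
        Real.exp (-2 * Q x) / (W x + C + 1)) atTop (𝓝 0) := by
      have hempty : ⋂ n : ℕ, Set.Ioo (0:ℝ) (1/(n+1:ℝ)) = (∅ : Set ℝ) := by
        ext x
        simp only [Set.mem_iInter, Set.mem_Ioo, Set.mem_empty_iff_false, iff_false,
          not_forall]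
        by_contra hcon
        push_neg at hcon
        obtain ⟨n, hn⟩ := exists_nat_one_div_lt (hcon 0).1
        exact absurd (hcon n).2 (not_lt.mpr hn.le)
      have hanti : Antitone (fun n : ℕ => Set.Ioo (0:ℝ) (1/(n+1:ℝ))) := by
        intro m n hmn
        apply Set.Ioo_subset_Ioo le_rfl
        apply one_div_le_one_div_of_le (by positivity)
        have h1 : (m:ℝ) ≤ n := Nat.cast_le.mpr hmn
        linarith
      have h := MeasureTheory.tendsto_setIntegral_of_antitone
        (fun n : ℕ => measurableSet_Ioo) hanti ⟨0, by simpa using hH2b⟩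
      rw [hempty] at h
      simpa using h
    obtain ⟨nA, hnA⟩ := (tendA.eventually_lt_const hτ).exists
    obtain ⟨aK, haKdef⟩ : ∃ d : ℝ, d = 1/(nA+1:ℝ) := ⟨_, rfl⟩
    rw [← haKdef] at hnA
    have haKpos : 0 < aK := by rw [haKdef]; positivity
    have haK1 : aK ≤ 1 := by
      rw [haKdef, div_le_one (by positivity)]
      have := Nat.cast_nonneg (α := ℝ) nA
      linarith
    -- choose MK using (H2a)
    have tendM : Tendsto (fun n : ℕ => ∫ x in Set.Ioi ((n:ℕ):ℝ), Real.exp (-2 * Q x))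
        atTop (𝓝 0) := by
      have hempty : ⋂ n : ℕ, Set.Ioi ((n:ℕ):ℝ) = (∅ : Set ℝ) := by
        ext x
        simp only [Set.mem_iInter, Set.mem_Ioi, Set.mem_empty_iff_false, iff_false,
          not_forall]
        by_contra hcon
        push_neg at hcon
        obtain ⟨n, hn⟩ := exists_nat_gt x
        exact absurd (hcon n) (not_lt.mpr hn.le)
      have hanti : Antitone (fun n : ℕ => Set.Ioi ((n:ℕ):ℝ)) :=
        fun m n hmn => Set.Ioi_subset_Ioi (Nat.cast_le.mpr hmn)
      have h := MeasureTheory.tendsto_setIntegral_of_antitone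
        (fun n : ℕ => measurableSet_Ioi) hanti
        ⟨1, by simpa using hH2a⟩
      rw [hempty] at h
      simpa using h
    obtain ⟨nM, hnM1, hnM⟩ := ((eventually_ge_atTop 1).and (tendM.eventually_lt_const hτ)).exists
    obtain ⟨MK, hMKdef⟩ : ∃ d : ℝ, d = max ((nM:ℕ):ℝ) M₀ := ⟨_, rfl⟩
    have hMK1 : (1:ℝ) ≤ MK := hMKdef ▸ le_trans hM₀1 (le_max_right _ _)
    have haKMK : aK ≤ MK := le_trans haK1 hMK1
    have hnMr : (1:ℝ) ≤ (nM:ℝ) := by exact_mod_cast hnM1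
    refine ⟨aK, MK, haKpos, haK1, hMK1, ?_⟩
    intro ε hε
    obtain ⟨K1, K2, K3, K4, K5, K6, K7⟩ := hkey ε hε
    rw [hνap ε hε _ measurableSet_Icc.compl]
    have hsplitset : (Set.Icc aK MK)ᶜ ∩ Set.Ioo ε (1/ε)
        = (Set.Ioo ε (1/ε) ∩ Set.Iio aK) ∪ (Set.Ioo ε (1/ε) ∩ Set.Ioi MK) := by
      ext y
      simp only [Set.mem_inter_iff, Set.mem_compl_iff, Set.mem_Icc, Set.mem_Ioo,
        Set.mem_Iio, Set.mem_Ioi, Set.mem_union, not_and, not_le]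
      constructor
      · rintro ⟨hc, hy⟩
        rcases lt_or_ge y aK with h | h
        · exact Or.inl ⟨hy, h⟩
        · exact Or.inr ⟨hy, hc h⟩
      · rintro (⟨hy, h⟩ | ⟨hy, h⟩)
        · exact ⟨fun h2 => absurd h (not_lt.mpr h2), hy⟩
        · exact ⟨fun _ => h, hy⟩
    -- pointwise AM-GM bound
    have hptwgen : ∀ y ∈ Set.Ioo ε (1/ε),
        η ε y * Real.exp (-2 * Q y) ≤ t/2 * ((W y + C + 1) * (η ε y * Real.exp (-Q y))^2)
          + 1/(2*t) * (Real.exp (-2 * Q y) / (W y + C + 1)) := by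
      intro y hy
      have hy0 : y ∈ Set.Ioi (0:ℝ) := lt_trans hε.1 hy.1
      have hw : 0 < W y + C + 1 := lt_of_lt_of_le one_pos (hW1 y hy0)
      have h := amgm_div t (W y + C + 1) (η ε y * Real.exp (-Q y)) (Real.exp (-Q y)) ht hw
      have he1 : η ε y * Real.exp (-Q y) * Real.exp (-Q y) = η ε y * Real.exp (-2 * Q y) := by
        rw [hexpQ (Q y)]; ring
      have he2 : Real.exp (-Q y)^2 = Real.exp (-2 * Q y) := by rw [sq, ← hexpQ]
      rw [he1, he2] at h
      exact h
    -- first tail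
    have hSA : (∫ y in Set.Ioo ε (1/ε) ∩ Set.Iio aK, η ε y * Real.exp (-2 * Q y)) ≤ δ' := by
      have hsub01 : Set.Ioo ε (1/ε) ∩ Set.Iio aK ⊆ Set.Ioo 0 aK :=
        fun y hy => ⟨lt_trans hε.1 hy.1.1, hy.2⟩
      have hsub011 : Set.Ioo (0:ℝ) aK ⊆ Set.Ioo 0 1 :=
        Set.Ioo_subset_Ioo le_rfl haK1
      have hint1 : IntegrableOn (fun y => (W y + C + 1) * (η ε y * Real.exp (-Q y))^2)
          (Set.Ioo ε (1/ε) ∩ Set.Iio aK) := K4.mono_set Set.inter_subset_left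
      have hint2 : IntegrableOn (fun y => Real.exp (-2 * Q y) / (W y + C + 1))
          (Set.Ioo ε (1/ε) ∩ Set.Iio aK) := (hH2b.mono_set hsub011).mono_set hsub01
      have hgSA : IntegrableOn (fun y => η ε y * Real.exp (-2 * Q y))
          (Set.Ioo ε (1/ε) ∩ Set.Iio aK) := (hgint ε hε).mono_set Set.inter_subset_left
      have h1 : (∫ y in Set.Ioo ε (1/ε) ∩ Set.Iio aK, η ε y * Real.exp (-2 * Q y))
          ≤ ∫ y in Set.Ioo ε (1/ε) ∩ Set.Iio aK,
              (t/2 * ((W y + C + 1) * (η ε y * Real.exp (-Q y))^2)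
                + 1/(2*t) * (Real.exp (-2 * Q y) / (W y + C + 1))) := by
        apply MeasureTheory.setIntegral_mono_on hgSA
          ((hint1.const_mul _).add (hint2.const_mul _))
          (measurableSet_Ioo.inter measurableSet_Iio)
          (fun y hy => hptwgen y hy.1)
      rw [MeasureTheory.integral_add (hint1.const_mul _) (hint2.const_mul _),
        MeasureTheory.integral_const_mul, MeasureTheory.integral_const_mul] at h1
      have h2 : (∫ y in Set.Ioo ε (1/ε) ∩ Set.Iio aK,
          (W y + C + 1) * (η ε y * Real.exp (-Q y))^2)
          ≤ ∫ y in Set.Ioo ε (1/ε), (W y + C + 1) * (η ε y * Real.exp (-Q y))^2 := by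
        apply MeasureTheory.setIntegral_mono_set K4
        · refine (ae_restrict_iff' measurableSet_Ioo).mpr (ae_of_all _ ?_)
          intro y hy
          have hy0 : y ∈ Set.Ioi (0:ℝ) := lt_trans hε.1 hy.1
          exact mul_nonneg (by linarith [hW1 y hy0]) (sq_nonneg _)
        · exact (Set.inter_subset_left).eventuallyLE
      have h3 : (∫ y in Set.Ioo ε (1/ε) ∩ Set.Iio aK, Real.exp (-2 * Q y) / (W y + C + 1))
          ≤ ∫ y in Set.Ioo (0:ℝ) aK, Real.exp (-2 * Q y) / (W y + C + 1) := by
        apply MeasureTheory.setIntegral_mono_set (hH2b.mono_set hsub011)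
        · refine (ae_restrict_iff' measurableSet_Ioo).mpr (ae_of_all _ ?_)
          intro y hy
          have hw : 0 < W y + C + 1 := lt_of_lt_of_le one_pos (hW1 y hy.1)
          positivity
        · exact hsub01.eventuallyLE
      have heq : t/2 * B + 1/(2*t) * τ = δ' := by
        rw [hτdef, htdef]
        field_simp
        ring
      have hb1 : t/2 * (∫ y in Set.Ioo ε (1/ε) ∩ Set.Iio aK,
          (W y + C + 1) * (η ε y * Real.exp (-Q y))^2) ≤ t/2 * B :=
        mul_le_mul_of_nonneg_left (le_trans h2 K5) (by positivity)
      have hb2 : 1/(2*t) * (∫ y in Set.Ioo ε (1/ε) ∩ Set.Iio aK,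
          Real.exp (-2 * Q y) / (W y + C + 1)) ≤ 1/(2*t) * τ :=
        mul_le_mul_of_nonneg_left (le_trans h3 hnA.le) (by positivity)
      linarith
    -- second tail
    have hSM : (∫ y in Set.Ioo ε (1/ε) ∩ Set.Ioi MK, η ε y * Real.exp (-2 * Q y)) ≤ δ' := by
      have hsubM : Set.Ioo ε (1/ε) ∩ Set.Ioi MK ⊆ Set.Ioi ((nM:ℕ):ℝ) :=
        fun y hy => lt_of_le_of_lt (hMKdef ▸ le_max_left ((nM:ℕ):ℝ) M₀) hy.2
      have hsubM1 : Set.Ioi ((nM:ℕ):ℝ) ⊆ Set.Ioi (1:ℝ) :=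
        fun y hy => lt_of_le_of_lt hnMr hy
      have hint1 : IntegrableOn (fun y => (W y + C + 1) * (η ε y * Real.exp (-Q y))^2)
          (Set.Ioo ε (1/ε) ∩ Set.Ioi MK) := K4.mono_set Set.inter_subset_left
      have hint2 : IntegrableOn (fun y => Real.exp (-2 * Q y))
          (Set.Ioo ε (1/ε) ∩ Set.Ioi MK) := (hH2a.mono_set hsubM1).mono_set hsubM
      have hgSM : IntegrableOn (fun y => η ε y * Real.exp (-2 * Q y))
          (Set.Ioo ε (1/ε) ∩ Set.Ioi MK) := (hgint ε hε).mono_set Set.inter_subset_left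
      have hptwM : ∀ y ∈ Set.Ioo ε (1/ε) ∩ Set.Ioi MK,
          η ε y * Real.exp (-2 * Q y) ≤ t/2 * ((W y + C + 1) * (η ε y * Real.exp (-Q y))^2)
            + 1/(2*t) * Real.exp (-2 * Q y) := by
        intro y hy
        have hy0 : y ∈ Set.Ioi (0:ℝ) := lt_trans hε.1 hy.1.1
        have hdd : Real.exp (-2 * Q y) / (W y + C + 1) ≤ Real.exp (-2 * Q y) :=
          div_le_self (Real.exp_pos _).le (hW1 y hy0)
        have := hptwgen y hy.1
        have h2 : 1/(2*t) * (Real.exp (-2 * Q y) / (W y + C + 1))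
            ≤ 1/(2*t) * Real.exp (-2 * Q y) :=
          mul_le_mul_of_nonneg_left hdd (by positivity)
        linarith
      have h1 : (∫ y in Set.Ioo ε (1/ε) ∩ Set.Ioi MK, η ε y * Real.exp (-2 * Q y))
          ≤ ∫ y in Set.Ioo ε (1/ε) ∩ Set.Ioi MK,
              (t/2 * ((W y + C + 1) * (η ε y * Real.exp (-Q y))^2)
                + 1/(2*t) * Real.exp (-2 * Q y)) := by
        apply MeasureTheory.setIntegral_mono_on hgSM
          ((hint1.const_mul _).add (hint2.const_mul _))
          (measurableSet_Ioo.inter measurableSet_Ioi) hptwM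
      rw [MeasureTheory.integral_add (hint1.const_mul _) (hint2.const_mul _),
        MeasureTheory.integral_const_mul, MeasureTheory.integral_const_mul] at h1
      have h2 : (∫ y in Set.Ioo ε (1/ε) ∩ Set.Ioi MK,
          (W y + C + 1) * (η ε y * Real.exp (-Q y))^2)
          ≤ ∫ y in Set.Ioo ε (1/ε), (W y + C + 1) * (η ε y * Real.exp (-Q y))^2 := by
        apply MeasureTheory.setIntegral_mono_set K4
        · refine (ae_restrict_iff' measurableSet_Ioo).mpr (ae_of_all _ ?_)
          intro y hy
          have hy0 : y ∈ Set.Ioi (0:ℝ) := lt_trans hε.1 hy.1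
          exact mul_nonneg (by linarith [hW1 y hy0]) (sq_nonneg _)
        · exact (Set.inter_subset_left).eventuallyLE
      have h3 : (∫ y in Set.Ioo ε (1/ε) ∩ Set.Ioi MK, Real.exp (-2 * Q y))
          ≤ ∫ y in Set.Ioi ((nM:ℕ):ℝ), Real.exp (-2 * Q y) := by
        apply MeasureTheory.setIntegral_mono_set (hH2a.mono_set hsubM1)
        · exact (ae_restrict_iff' measurableSet_Ioi).mpr
            (ae_of_all _ (fun y _ => (Real.exp_pos _).le))
        · exact hsubM.eventuallyLE
      have heq : t/2 * B + 1/(2*t) * τ = δ' := by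
        rw [hτdef, htdef]
        field_simp
        ring
      have hb1 : t/2 * (∫ y in Set.Ioo ε (1/ε) ∩ Set.Ioi MK,
          (W y + C + 1) * (η ε y * Real.exp (-Q y))^2) ≤ t/2 * B :=
        mul_le_mul_of_nonneg_left (le_trans h2 K5) (by positivity)
      have hb2 : 1/(2*t) * (∫ y in Set.Ioo ε (1/ε) ∩ Set.Ioi MK, Real.exp (-2 * Q y))
          ≤ 1/(2*t) * τ :=
        mul_le_mul_of_nonneg_left (le_trans h3 hnM.le) (by positivity)
      linarith
    -- combine
    have hdisj : Disjoint (Set.Ioo ε (1/ε) ∩ Set.Iio aK) (Set.Ioo ε (1/ε) ∩ Set.Ioi MK) := by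
      rw [Set.disjoint_left]
      rintro y ⟨_, h1⟩ ⟨_, h2⟩
      exact absurd (lt_trans h2 h1) (not_lt.mpr haKMK)
    have hNum : (∫ y in (Set.Icc aK MK)ᶜ ∩ Set.Ioo ε (1/ε), η ε y * Real.exp (-2 * Q y))
        = (∫ y in Set.Ioo ε (1/ε) ∩ Set.Iio aK, η ε y * Real.exp (-2 * Q y))
          + ∫ y in Set.Ioo ε (1/ε) ∩ Set.Ioi MK, η ε y * Real.exp (-2 * Q y) := by
      rw [hsplitset]
      exact MeasureTheory.setIntegral_union hdisj
        (measurableSet_Ioo.inter measurableSet_Ioi)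
        ((hgint ε hε).mono_set Set.inter_subset_left)
        ((hgint ε hε).mono_set Set.inter_subset_left)
    apply ENNReal.ofReal_le_ofReal
    have hNumnn : 0 ≤ ∫ y in (Set.Icc aK MK)ᶜ ∩ Set.Ioo ε (1/ε), η ε y * Real.exp (-2 * Q y) :=
      MeasureTheory.setIntegral_nonneg (measurableSet_Icc.compl.inter measurableSet_Ioo)
        (fun y hy => hgnn ε hε y hy.2)
    have hZb := hZlb ε hε
    have hfinal : (∫ y in (Set.Icc aK MK)ᶜ ∩ Set.Ioo ε (1/ε), η ε y * Real.exp (-2 * Q y))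
        / (∫ y in ε..(1/ε), η ε y * Real.exp (-2 * Q y)) ≤ (2*δ') / Z₀ := by
      apply div_le_div₀ (by positivity) _ hZ₀pos hZb
      rw [hNum]
      linarith
    have h2δ : (2*δ') / Z₀ = δ := by
      rw [hδ'def]
      field_simp
    linarith
  refine ⟨?_, ?_⟩
  · -- part (i): tightness
    intro δ hδ
    obtain ⟨aK, MK, haK, haK1, hMK, hKb⟩ := main δ hδ
    refine ⟨Set.Icc aK MK, isCompact_Icc, fun x hx => lt_of_lt_of_le haK hx.1, ?_⟩
    intro ε hε
    exact le_trans (measure_mono (fun x hx => hx.2)) (hKb ε hε)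
  · -- part (ii): absolute continuity of weak limits
    intro εs νlim hmem h0 hPM hconv
    have hPMk : ∀ k, IsProbabilityMeasure (ν (εs k)) := fun k => hprob _ (hmem k)
    refine Measure.AbsolutelyContinuous.mk ?_
    intro s hsm hs0
    let P : ℕ → ProbabilityMeasure ℝ := fun k => ⟨ν (εs k), hPMk k⟩
    let Pl : ProbabilityMeasure ℝ := ⟨νlim, hPM⟩
    have hweak : Tendsto P atTop (𝓝 Pl) :=
      MeasureTheory.ProbabilityMeasure.tendsto_iff_forall_integral_tendsto.mpr
        (fun f => hconv f)
    have hbound : ∀ δ : ℝ, 0 < δ → νlim s ≤ ENNReal.ofReal (2*δ) := by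
      intro δ hδ
      obtain ⟨aK, MK, haK, haK1, hMK, hKb⟩ := main δ hδ
      have haKMK : aK ≤ MK := le_trans haK1 hMK
      have hIccsubK : Set.Icc aK MK ⊆ Set.Ioi (0:ℝ) := fun x hx => lt_of_lt_of_le haK hx.1
      obtain ⟨x₁, hx₁mem, hx₁max'⟩ := (isCompact_Icc (a := aK) (b := MK)).exists_isMaxOn
        ⟨aK, le_rfl, haKMK⟩
        (Real.continuous_exp.comp_continuousOn (hQc.mono hIccsubK).neg)
      have hx₁max : ∀ y ∈ Set.Icc aK MK, Real.exp (-Q y) ≤ Real.exp (-Q x₁) :=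
        fun y hy => hx₁max' hy
      obtain ⟨Cc, hCcdef, hCc⟩ : ∃ c : ℝ, c = S * Real.exp (-Q x₁) / Z₀ ∧ 0 < c :=
        ⟨_, rfl, by positivity⟩
      have hdb : ∀ ε ∈ Set.Ioo (0:ℝ) (1/2), ∀ U : Set ℝ, MeasurableSet U →
          ν ε (U ∩ Set.Icc aK MK) ≤ ENNReal.ofReal Cc * volume U := by
        intro ε hε U hU
        rw [hν ε hε, withDensity_apply _ (hU.inter measurableSet_Icc)]
        have hptw : ∀ x ∈ U ∩ Set.Icc aK MK,
            ENNReal.ofReal ((Set.Ioo ε (1/ε)).indicator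
              (fun y => η ε y * Real.exp (-2 * Q y)) x
              / (∫ y in ε..(1/ε), η ε y * Real.exp (-2 * Q y)))
            ≤ ENNReal.ofReal Cc := by
          intro x hx
          apply ENNReal.ofReal_le_ofReal
          by_cases hmem2 : x ∈ Set.Ioo ε (1/ε)
          · rw [Set.indicator_of_mem hmem2]
            have hxIcc : x ∈ Set.Icc ε (1/ε) := Set.Ioo_subset_Icc_self hmem2
            have hnum : η ε x * Real.exp (-2 * Q x) ≤ S * Real.exp (-Q x₁) := by
              have h1 : η ε x * Real.exp (-2 * Q x)
                  = (η ε x * Real.exp (-Q x)) * Real.exp (-Q x) := by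
                rw [hexpQ (Q x)]; ring
              rw [h1]
              exact mul_le_mul (husup ε hε x hxIcc) (hx₁max x hx.2)
                (Real.exp_pos _).le hSpos.le
            rw [hCcdef]
            exact div_le_div₀ (by positivity) hnum hZ₀pos (hZlb ε hε)
          · rw [Set.indicator_of_notMem hmem2, zero_div]
            exact hCc.le
        refine le_trans (setLIntegral_mono' (hU.inter measurableSet_Icc) hptw) ?_
        rw [MeasureTheory.setLIntegral_const]
        exact mul_le_mul_right (measure_mono Set.inter_subset_left) _
      obtain ⟨U, hsU, hUopen, hUvol⟩ := Set.exists_isOpen_lt_of_lt s (ENNReal.ofReal (δ/Cc))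
        (by rw [hs0]; exact ENNReal.ofReal_pos.mpr (by positivity))
      have hportm := MeasureTheory.ProbabilityMeasure.le_liminf_measure_open_of_tendsto
        hweak hUopen
      have hkb : ∀ k, (P k : Measure ℝ) U ≤ ENNReal.ofReal δ + ENNReal.ofReal δ := by
        intro k
        have h1 : ν (εs k) U ≤ ν (εs k) (U ∩ Set.Icc aK MK) + ν (εs k) (U \ Set.Icc aK MK) :=
          measure_le_inter_add_diff _ _ _
        have h2 : ν (εs k) (U ∩ Set.Icc aK MK) ≤ ENNReal.ofReal Cc * volume U :=
          hdb _ (hmem k) U hUopen.measurableSet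
        have h3 : ν (εs k) (U \ Set.Icc aK MK) ≤ ENNReal.ofReal δ :=
          le_trans (measure_mono (fun x hx => hx.2)) (hKb _ (hmem k))
        have h4 : ENNReal.ofReal Cc * volume U ≤ ENNReal.ofReal Cc * ENNReal.ofReal (δ/Cc) :=
          mul_le_mul_right hUvol.le _
        have h5 : ENNReal.ofReal Cc * ENNReal.ofReal (δ/Cc) = ENNReal.ofReal δ := by
          rw [← ENNReal.ofReal_mul hCc.le]
          congr 1
          field_simp
        exact le_trans h1 (add_le_add (le_trans h2 (le_trans h4 h5.le)) h3)
      have hlim : νlim U ≤ ENNReal.ofReal δ + ENNReal.ofReal δ := by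
        refine le_trans hportm ?_
        exact Filter.liminf_le_of_frequently_le'
          (Filter.Eventually.frequently (Filter.Eventually.of_forall hkb))
      refine le_trans (le_trans (measure_mono hsU) hlim) ?_
      rw [← ENNReal.ofReal_add hδ.le hδ.le]
      apply ENNReal.ofReal_le_ofReal
      linarith
    by_contra hne
    have hfin : νlim s ≠ ⊤ := (measure_lt_top νlim s).ne
    have hr : 0 < (νlim s).toReal := ENNReal.toReal_pos hne hfin
    have h1 := hbound ((νlim s).toReal/4) (by positivity)
    have h2 : ENNReal.ofReal (2*((νlim s).toReal/4)) < νlim s := by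
      rw [show 2*((νlim s).toReal/4) = (νlim s).toReal/2 from by ring]
      conv_rhs => rw [← ENNReal.ofReal_toReal hfin]
      exact (ENNReal.ofReal_lt_ofReal_iff hr).mpr (by linarith)
    exact absurd h1 (not_le.mpr h2)
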